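/- In the decomposition algorithm with parameter d > 1, suppose a refined segment [b_c, j] is appended to RS[c] at column j, and the right endpoint of the most recently appended segment in RS[c'] is strictly less than j, where c' = φ_j(c). Then [b_c, j] overlaps strictly fewer than d refined segments currently in RS[c']. -/

import Mathlib

/-- `Partitions L x y`: the list `L` of (nonempty, sorted, consecutive) integer
intervals partitions `[x, y]`. -/
def Partitions : List (ℕ × ℕ) → ℕ → ℕ → Prop
  | [], x, y => y + 1 = x
  | (b, e) :: t, x, y => b = x ∧ b ≤ e ∧ Partitions t (e + 1) y

/-- Number of intervals in `L` overlapping (nonempty intersection with) `[b, e]`. -/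
def overlapCnt (b e : ℕ) (L : List (ℕ × ℕ)) : ℕ :=
  (L.filter (fun p => decide (p.1 ≤ e ∧ b ≤ p.2))).length

lemma part_le {L : List (ℕ × ℕ)} {x y : ℕ} (h : Partitions L x y) : x ≤ y + 1 := by
  induction L generalizing x with
  | nil => exact le_of_eq (h : y + 1 = x).symm
  | cons a t ih =>
    obtain ⟨hb, hbe, ht⟩ := h
    have := ih ht
    omega

lemma part_bounds {L : List (ℕ × ℕ)} {x y : ℕ} (h : Partitions L x y) {p : ℕ × ℕ}
    (hp : p ∈ L) : x ≤ p.1 ∧ p.1 ≤ p.2 ∧ p.2 ≤ y := by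
  induction L generalizing x with
  | nil => simp at hp
  | cons a t ih =>
    obtain ⟨hb, hbe, ht⟩ := h
    have hle := part_le ht
    rcases List.mem_cons.mp hp with rfl | hp'
    · exact ⟨le_of_eq hb.symm, hbe, by omega⟩
    · have := ih ht hp'
      omega

lemma part_mem_le {L : List (ℕ × ℕ)} {x y : ℕ} (h : Partitions L x y) {p q : ℕ × ℕ}
    (hp : p ∈ L) (hq : q ∈ L) (hle : q.1 ≤ p.2) : q.2 ≤ p.2 := by
  induction L generalizing x with
  | nil => simp at hp
  | cons a t ih =>
    obtain ⟨hb, hbe, ht⟩ := h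
    rcases List.mem_cons.mp hp with rfl | hp'
    · rcases List.mem_cons.mp hq with rfl | hq'
      · rfl
      · have := part_bounds ht hq'; omega
    · rcases List.mem_cons.mp hq with rfl | hq'
      · have := part_bounds ht hp'; omega
      · exact ih ht hp' hq'

lemma part_pairwise {L : List (ℕ × ℕ)} {x y : ℕ} (h : Partitions L x y) :
    L.Pairwise (fun p q => p.2 < q.2) := by
  induction L generalizing x with
  | nil => exact List.Pairwise.nil
  | cons a t ih =>
    obtain ⟨hb, hbe, ht⟩ := h
    refine List.pairwise_cons.mpr ⟨fun q hq => ?_, ih ht⟩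
    have := part_bounds ht hq
    omega

lemma part_append {L R : List (ℕ × ℕ)} {x y y' : ℕ} (h : Partitions (L ++ R) x y)
    (h' : Partitions L x y') : Partitions R (y' + 1) y := by
  induction L generalizing x with
  | nil =>
    obtain rfl : y' + 1 = x := h'
    simpa using h
  | cons a t ih =>
    obtain ⟨hb, hbe, ht⟩ := h
    obtain ⟨hb', hbe', ht'⟩ := h'
    exact ih ht ht'

lemma filter_take (F : List (ℕ × ℕ)) (hF : F.Pairwise (fun p q => p.2 < q.2)) :
    ∀ i : ℕ, ∀ h : i < F.length,
      F.filter (fun q => decide (q.2 ≤ F[i].2)) = F.take (i + 1) := by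
  induction F with
  | nil => intro i h; simp at h
  | cons a t ih =>
    intro i h
    obtain ⟨ha, ht⟩ := List.pairwise_cons.mp hF
    cases i with
    | zero =>
      simp only [List.getElem_cons_zero, List.take, List.filter_cons, decide_eq_true_eq]
      rw [if_pos le_rfl]
      have : t.filter (fun q => decide (q.2 ≤ a.2)) = [] := by
        apply List.filter_eq_nil_iff.mpr
        intro q hq
        simpa using Nat.not_le_of_lt (ha q hq)
      simp [this]
    | succ i' =>
      have hi' : i' < t.length := by simpa using h
      have hget : (a :: t)[i' + 1] = t[i'] := by simp
      rw [hget]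
      have hmem : t[i'] ∈ t := List.getElem_mem hi'
      have hle : a.2 ≤ t[i'].2 := le_of_lt (ha _ hmem)
      simp only [List.filter_cons, decide_eq_true_eq]
      rw [if_pos hle, List.take_succ_cons, ih ht i' hi']

/-- Lemma (ending before `j`).  `A t` is the state of `RS[c']`
(`c' = φ_t(c)`, constant on `[b, j]`) at column `t`, partitioning a prefix
`[1, y t]` with `y t ≤ t`; earlier states are prefixes of later ones and every
segment is present at the column of its right endpoint.  Suppose the refined
segment `[b, j]` is appended to `RS[c]` at column `j` (so by disjointness no
Active Split was triggered earlier on `[b, ·]`: the trigger hypothesis `htrig`),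
and the right endpoint of every (in particular the most recently appended)
segment in `A j` is strictly less than `j`.  Then `[b, j]` overlaps strictly
fewer than `d` segments of `A j`. -/
theorem stmt8 (d b j : ℕ) (A : ℕ → List (ℕ × ℕ)) (y : ℕ → ℕ)
    (hpart : ∀ t, Partitions (A t) 1 (y t)) (hy : ∀ t, y t ≤ t)
    (hpre : ∀ t t', t ≤ t' → A t <+: A t')
    (happ : ∀ t, ∀ p ∈ A t, p ∈ A p.2)
    (hd : 1 < d) (hb1 : 1 ≤ b) (hbj : b ≤ j)
    (hlast : ∀ p ∈ A j, p.2 < j)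
    (htrig : ∀ j', b ≤ j' → j' < j → overlapCnt b j' (A j') ≠ d) :
    overlapCnt b j (A j) < d := by
  by_contra hcon
  push_neg at hcon
  have hpartj := hpart j
  set L := A j with hLdef
  set F := L.filter (fun q => decide (b ≤ q.2)) with hFdef
  have hFL : overlapCnt b j L = F.length := by
    unfold overlapCnt
    rw [hFdef]
    congr 1
    apply List.filter_congr
    intro q hq
    have hb := part_bounds hpartj hq
    have hyj := hy j
    simp only [decide_eq_decide]
    constructor
    · exact fun h => h.2
    · exact fun h => ⟨by omega, h⟩
  have hdlen : d - 1 < F.length := by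
    rw [hFL] at hcon; omega
  set p := F[d - 1] with hpdef
  have hpF : p ∈ F := List.getElem_mem hdlen
  have hpL : p ∈ L := List.mem_of_mem_filter hpF
  have hbp : b ≤ p.2 := by simpa using List.of_mem_filter hpF
  have hj'j : p.2 < j := hlast p hpL
  have hpA : p ∈ A p.2 := happ j p hpL
  have hprefix : A p.2 <+: A j := hpre p.2 j (le_of_lt hj'j)
  obtain ⟨R, hR⟩ := hprefix
  have hpartj' := hpart p.2
  have hpartR : Partitions R (y p.2 + 1) (y j) :=
    part_append (hR ▸ hpartj) hpartj'
  have hp2y : p.2 ≤ y p.2 := (part_bounds hpartj' hpA).2.2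
  have h1 : overlapCnt b p.2 L = overlapCnt b p.2 (A p.2) := by
    unfold overlapCnt
    conv_lhs => rw [hLdef, ← hR]
    rw [List.filter_append, List.length_append]
    have : R.filter (fun q => decide (q.1 ≤ p.2 ∧ b ≤ q.2)) = [] := by
      apply List.filter_eq_nil_iff.mpr
      intro q hq
      have := part_bounds hpartR hq
      simp only [decide_eq_true_eq, not_and]
      intro h
      omega
    rw [this]
    simp
  have h2 : overlapCnt b p.2 L = d := by
    unfold overlapCnt
    have hcongr : L.filter (fun q => decide (q.1 ≤ p.2 ∧ b ≤ q.2)) =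
        L.filter (fun q => decide (q.2 ≤ p.2) && decide (b ≤ q.2)) := by
      apply List.filter_congr
      intro q hq
      have hb := part_bounds hpartj hq
      have hiff : q.1 ≤ p.2 ↔ q.2 ≤ p.2 :=
        ⟨fun h => part_mem_le hpartj hpL hq h, fun h => by omega⟩
      simp [hiff]
    rw [hcongr, ← List.filter_filter, ← hFdef]
    have hFpw : F.Pairwise (fun p q => p.2 < q.2) :=
      (part_pairwise hpartj).sublist List.filter_sublist
    rw [show p.2 = F[d - 1].2 from rfl, filter_take F hFpw (d - 1) hdlen,
      List.length_take]
    omega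
  exact htrig p.2 hbp hj'j (h1 ▸ h2)
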